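/- Fix D ∈ ℝ^{m×p}. If either p ≤ n, or p > n and the dimension of the null space of D is at most n (nullity(D) ≤ n), then the set of matrices X ∈ ℝ^{n×p} for which null(X) ∩ null(D) ≠ {0} has (np)-dimensional Lebesgue measure zero. Consequently, if the entries of X are drawn from any probability distribution absolutely continuous with respect to (np)-dimensional Lebesgue measure, then null(X) ∩ null(D) = {0} almost surely. -/

import Mathlib

open Matrix MeasureTheory

-- zero set of a nonzero multivariate polynomial is Lebesgue-null
lemma mvpoly_zero_set_null : ∀ (N : ℕ) (P : MvPolynomial (Fin N) ℝ), P ≠ 0 →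
    volume {x : Fin N → ℝ | MvPolynomial.eval x P = 0} = 0 := by
  intro N
  induction N with
  | zero =>
    intro P hP
    obtain ⟨r, rfl⟩ := MvPolynomial.C_surjective (Fin 0) P
    have hr : r ≠ 0 := fun h => hP (by rw [h, map_zero])
    have : {x : Fin 0 → ℝ | MvPolynomial.eval x (MvPolynomial.C r) = 0} = ∅ := by
      ext x; simp [hr]
    rw [this]; exact measure_empty
  | succ N ih =>
    intro P hP
    set q := MvPolynomial.finSuccEquiv ℝ N P with hq_def
    have hq : q ≠ 0 := fun h => hP ((map_eq_zero_iff _ (AlgEquiv.injective _)).mp h)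
    obtain ⟨j, hj⟩ : ∃ j, q.coeff j ≠ 0 := by
      by_contra h
      push_neg at h
      exact hq (Polynomial.ext fun j => by simp [h j])
    set d := q.natDegree + 1 with hd
    set F : ℝ × (Fin N → ℝ) → ℝ :=
      fun z => ∑ i ∈ Finset.range d, MvPolynomial.eval z.2 (q.coeff i) * z.1 ^ i with hF
    have hFeq : ∀ (y : ℝ) (s : Fin N → ℝ),
        Polynomial.eval y (q.map (MvPolynomial.eval s)) = F (y, s) := by
      intro y s
      rw [Polynomial.eval_map]
      exact Polynomial.eval₂_eq_sum_range' (MvPolynomial.eval s) (Nat.lt_succ_self _) y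
    have hFcont : Continuous F := by
      apply continuous_finset_sum
      intro i _
      exact ((MvPolynomial.continuous_eval (q.coeff i)).comp continuous_snd).mul
        ((continuous_pow i).comp continuous_fst)
    set Z' : Set (ℝ × (Fin N → ℝ)) := {z | F z = 0} with hZ'
    have hZ'meas : MeasurableSet Z' := (isClosed_eq hFcont continuous_const).measurableSet
    have hφ := measurePreserving_piFinSuccAbove (fun _ : Fin (N + 1) => (volume : Measure ℝ)) 0
    have hpre : {x : Fin (N + 1) → ℝ | MvPolynomial.eval x P = 0}
        = (MeasurableEquiv.piFinSuccAbove (fun _ => ℝ) 0) ⁻¹' Z' := by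
      ext x
      have hx : x = Fin.cons (x 0) (fun i => x i.succ) := by
        funext i
        refine Fin.cases ?_ ?_ i <;> simp
      have hkey : MvPolynomial.eval x P = F (x 0, fun i => x i.succ) := by
        conv_lhs => rw [hx]
        rw [MvPolynomial.eval_eq_eval_mv_eval', hFeq]
      simp only [Set.mem_setOf_eq, Set.mem_preimage, hZ']
      constructor
      · intro h
        show F (x 0, fun i => x (Fin.succAbove 0 i)) = 0
        have : (fun i : Fin N => x (Fin.succAbove 0 i)) = fun i => x i.succ := by
          funext i; simp [Fin.succAbove]
        rw [this, ← hkey]; exact h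
      · intro h
        have h2 : F (x 0, fun i => x (Fin.succAbove 0 i)) = 0 := h
        have : (fun i : Fin N => x (Fin.succAbove 0 i)) = fun i => x i.succ := by
          funext i; simp [Fin.succAbove]
        rw [this, ← hkey] at h2; exact h2
    rw [hpre]
    refine Eq.trans (hφ.measure_preimage hZ'meas.nullMeasurableSet) ?_
    show ((volume : Measure ℝ).prod (volume : Measure (Fin N → ℝ))) Z' = 0
    have hswap : ((volume : Measure ℝ).prod (volume : Measure (Fin N → ℝ))) Z'
        = ((volume : Measure (Fin N → ℝ)).prod (volume : Measure ℝ)) (Prod.swap ⁻¹' Z') := by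
      rw [← Measure.prod_swap, Measure.map_apply measurable_swap hZ'meas]
    rw [hswap, Measure.measure_prod_null (hZ'meas.preimage measurable_swap)]
    have hae : ∀ᵐ s : (Fin N → ℝ), MvPolynomial.eval s (q.coeff j) ≠ 0 := by
      rw [ae_iff]
      convert ih (q.coeff j) hj using 2
      ext s; simp
    filter_upwards [hae] with s hs
    simp only [Pi.zero_apply]
    have hmapne : q.map (MvPolynomial.eval s) ≠ 0 := by
      intro h
      apply hs
      have := congrArg (fun r => Polynomial.coeff r j) h
      simpa [Polynomial.coeff_map] using this
    have hfin : Set.Finite {y : ℝ | Polynomial.IsRoot (q.map (MvPolynomial.eval s)) y} :=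
      Polynomial.finite_setOf_isRoot hmapne
    refine measure_mono_null ?_ (hfin.measure_zero volume)
    intro y hy
    simp only [Set.mem_preimage] at hy
    have : F (y, s) = 0 := hy
    simp only [Set.mem_setOf_eq, Polynomial.IsRoot]
    rw [hFeq]; exact this

-- the curry equivalence as a measurable equiv
def mcurry (n p : ℕ) : ((Fin n × Fin p) → ℝ) ≃ᵐ (Fin n → Fin p → ℝ) where
  toEquiv := Equiv.curry (Fin n) (Fin p) ℝ
  measurable_toFun := by
    apply measurable_pi_lambda
    intro i
    apply measurable_pi_lambda
    intro j
    exact measurable_pi_apply (i, j)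
  measurable_invFun := by
    apply measurable_pi_lambda
    intro q
    exact (measurable_pi_apply q.2).comp (measurable_pi_apply q.1)

lemma mcurry_measurePreserving (p : ℕ) :
    ∀ n : ℕ, MeasurePreserving (mcurry n p) volume volume := by
  intro n
  induction n with
  | zero =>
    haveI : IsEmpty (Fin 0 × Fin p) := ⟨fun q => q.1.elim0⟩
    refine ⟨(mcurry 0 p).measurable, ?_⟩
    have h1 : (volume : Measure ((Fin 0 × Fin p) → ℝ)) = Measure.dirac isEmptyElim :=
      Measure.pi_of_empty _
    have h2 : (volume : Measure (Fin 0 → Fin p → ℝ)) = Measure.dirac isEmptyElim :=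
      Measure.pi_of_empty _
    rw [h1, h2, Measure.map_dirac' (mcurry 0 p).measurable]
    congr 1
    exact Subsingleton.elim _ _
  | succ n ihn =>
    -- the reindexing equivalence
    let e : (Fin p ⊕ (Fin n × Fin p)) ≃ (Fin (n + 1) × Fin p) :=
      { toFun := Sum.elim (fun j => (0, j)) (fun q => (q.1.succ, q.2))
        invFun := fun q => Fin.cases (Sum.inl q.2) (fun i => Sum.inr (i, q.2)) q.1
        left_inv := by rintro (j | ⟨i, j⟩) <;> simp
        right_inv := by
          rintro ⟨i, j⟩
          refine Fin.cases ?_ ?_ i <;> simp }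
    have h1 := measurePreserving_arrowCongr' (fun _ : Fin (n+1) × Fin p => (volume : Measure ℝ))
      (fun _ : Fin p ⊕ (Fin n × Fin p) => (volume : Measure ℝ)) e.symm (MeasurableEquiv.refl ℝ)
      (fun _ => MeasurePreserving.id _)
    have h2 := volume_measurePreserving_sumPiEquivProdPi (fun _ : Fin p ⊕ (Fin n × Fin p) => ℝ)
    have h3 := (MeasurePreserving.id (volume : Measure (Fin p → ℝ))).prod
      (ihn : MeasurePreserving (mcurry n p) volume volume)
    have h4 := (measurePreserving_piFinSuccAbove
      (fun _ : Fin (n + 1) => (volume : Measure (Fin p → ℝ))) 0).symm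
    have hcomp := ((h4.comp h3).comp h2).comp h1
    have hfun : (⇑(MeasurableEquiv.piFinSuccAbove (fun _ : Fin (n+1) => (Fin p → ℝ)) 0).symm ∘
        (Prod.map id ⇑(mcurry n p)) ∘
        ⇑(MeasurableEquiv.sumPiEquivProdPi (fun _ : Fin p ⊕ (Fin n × Fin p) => ℝ)) ∘
        ⇑(MeasurableEquiv.arrowCongr' e.symm (MeasurableEquiv.refl ℝ)))
        = ⇑(mcurry (n+1) p) := by
      funext x
      funext i j
      refine Fin.cases ?_ ?_ i
      · simp [MeasurableEquiv.piFinSuccAbove, MeasurableEquiv.sumPiEquivProdPi,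
          MeasurableEquiv.arrowCongr', Equiv.arrowCongr', Equiv.arrowCongr, mcurry, e]
      · intro i'
        simp [MeasurableEquiv.piFinSuccAbove, MeasurableEquiv.sumPiEquivProdPi,
          MeasurableEquiv.arrowCongr', Equiv.arrowCongr', Equiv.arrowCongr, mcurry, e]
    rw [← hfun]
    exact hcomp

theorem continuous_X_null_intersection_trivial_almost_surely
    (n p m : ℕ) (D : Matrix (Fin m) (Fin p) ℝ)
    (hdim : p ≤ n ∨ (n < p ∧ Module.finrank ℝ (LinearMap.ker D.mulVecLin) ≤ n)) :
    volume {X : Fin n → Fin p → ℝ |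
      ∃ β : Fin p → ℝ, β ≠ 0 ∧ (Matrix.of X).mulVec β = 0 ∧ D.mulVec β = 0} = 0 ∧
    ∀ μ : Measure (Fin n → Fin p → ℝ), μ ≪ volume →
      μ {X : Fin n → Fin p → ℝ |
        ∃ β : Fin p → ℝ, β ≠ 0 ∧ (Matrix.of X).mulVec β = 0 ∧ D.mulVec β = 0} = 0 := by
  classical
  set K := LinearMap.ker D.mulVecLin with hK
  set k := Module.finrank ℝ K with hkdef
  have hk : k ≤ n := by
    rcases hdim with h | h
    · calc k ≤ Module.finrank ℝ (Fin p → ℝ) := Submodule.finrank_le K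
        _ = p := Module.finrank_fin_fun ℝ
        _ ≤ n := h
    · exact h.2
  let b : Module.Basis (Fin k) ℝ K := Module.finBasis ℝ K
  let B : Matrix (Fin p) (Fin k) ℝ := Matrix.of fun i j => ((b j : Fin p → ℝ) i)
  have hBcoe : ∀ γ : Fin k → ℝ, B.mulVec γ = (((∑ j, γ j • b j : K) : Fin p → ℝ)) := by
    intro γ
    funext i
    simp only [Matrix.mulVec, dotProduct, B, Matrix.of_apply,
      AddSubmonoidClass.coe_finset_sum, Finset.sum_apply, SetLike.val_smul, Pi.smul_apply,
      smul_eq_mul]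
    exact Finset.sum_congr rfl fun j _ => mul_comm _ _
  have hBmem : ∀ γ : Fin k → ℝ, B.mulVec γ ∈ K := by
    intro γ; rw [hBcoe]; exact (∑ j, γ j • b j : K).2
  have hBinj : ∀ γ : Fin k → ℝ, B.mulVec γ = 0 → γ = 0 := by
    intro γ h
    rw [hBcoe] at h
    have h2 : (∑ j, γ j • b j : K) = 0 := Subtype.coe_injective h
    have h3 := Fintype.linearIndependent_iff.mp b.linearIndependent γ h2
    funext j; exact h3 j
  have hBsurj : ∀ β : Fin p → ℝ, β ∈ K → ∃ γ : Fin k → ℝ, B.mulVec γ = β := by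
    intro β hβ
    refine ⟨fun j => b.repr ⟨β, hβ⟩ j, ?_⟩
    rw [hBcoe]
    rw [show (∑ j, b.repr ⟨β, hβ⟩ j • b j : K) = ⟨β, hβ⟩ from b.sum_repr ⟨β, hβ⟩]
  -- the bad set as a determinant zero set
  have hset : {X : Fin n → Fin p → ℝ |
      ∃ β : Fin p → ℝ, β ≠ 0 ∧ (Matrix.of X).mulVec β = 0 ∧ D.mulVec β = 0}
      = {X : Fin n → Fin p → ℝ |
        (((Matrix.of X * B)ᵀ * (Matrix.of X * B)).det = 0)} := by
    ext X
    simp only [Set.mem_setOf_eq]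
    rw [← Matrix.exists_mulVec_eq_zero_iff]
    constructor
    · rintro ⟨β, hβ0, hXβ, hDβ⟩
      have hβK : β ∈ K := by rw [hK]; exact LinearMap.mem_ker.mpr (by rw [Matrix.mulVecLin_apply]; exact hDβ)
      obtain ⟨γ, hγ⟩ := hBsurj β hβK
      refine ⟨γ, fun h => hβ0 (by rw [← hγ, h, Matrix.mulVec_zero]), ?_⟩
      have hMγ : (Matrix.of X * B).mulVec γ = 0 := by
        rw [← Matrix.mulVec_mulVec, hγ, hXβ]
      have := Matrix.ker_mulVecLin_transpose_mul_self (Matrix.of X * B)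
      have hmem : γ ∈ LinearMap.ker (Matrix.of X * B).mulVecLin :=
        LinearMap.mem_ker.mpr (by rw [Matrix.mulVecLin_apply]; exact hMγ)
      rw [← this] at hmem
      have := LinearMap.mem_ker.mp hmem
      rwa [Matrix.mulVecLin_apply] at this
    · rintro ⟨γ, hγ0, hγ⟩
      have hMγ : (Matrix.of X * B).mulVec γ = 0 := by
        have hmem : γ ∈ LinearMap.ker (((Matrix.of X * B)ᵀ * (Matrix.of X * B)).mulVecLin) :=
          LinearMap.mem_ker.mpr (by rw [Matrix.mulVecLin_apply]; exact hγ)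
        rw [Matrix.ker_mulVecLin_transpose_mul_self] at hmem
        have := LinearMap.mem_ker.mp hmem
        rwa [Matrix.mulVecLin_apply] at this
      refine ⟨B.mulVec γ, fun h => hγ0 (hBinj γ h), ?_, ?_⟩
      · rw [Matrix.mulVec_mulVec]; exact hMγ
      · have := hBmem γ
        rw [hK, LinearMap.mem_ker, Matrix.mulVecLin_apply] at this
        exact this
  -- the determinant as a polynomial
  let Xv : Matrix (Fin n) (Fin p) (MvPolynomial (Fin n × Fin p) ℝ) :=
    Matrix.of fun i j => MvPolynomial.X (i, j)
  let Bv : Matrix (Fin p) (Fin k) (MvPolynomial (Fin n × Fin p) ℝ) := B.map MvPolynomial.C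
  let P : MvPolynomial (Fin n × Fin p) ℝ := ((Xv * Bv)ᵀ * (Xv * Bv)).det
  have heval : ∀ x : (Fin n × Fin p) → ℝ,
      MvPolynomial.eval x P =
        (((Matrix.of fun i j => x (i, j)) * B)ᵀ * ((Matrix.of fun i j => x (i, j)) * B)).det := by
    intro x
    have hmap : (Xv * Bv).map (MvPolynomial.eval x) = (Matrix.of fun i j => x (i, j)) * B := by
      rw [Matrix.map_mul]
      congr 1
      · ext i j; simp [Xv]
      · ext i j; simp [Bv]
    calc MvPolynomial.eval x P
        = (((Xv * Bv)ᵀ * (Xv * Bv)).map (MvPolynomial.eval x)).det :=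
          RingHom.map_det (MvPolynomial.eval x) _
      _ = _ := by rw [Matrix.map_mul, Matrix.transpose_map, hmap]
  -- P is nonzero
  have hP0 : P ≠ 0 := by
    intro hP
    set x0 : (Fin n × Fin p) → ℝ :=
      fun q => if h : (q.1 : ℕ) < k then B q.2 ⟨q.1, h⟩ else 0 with hx0
    have h0 : MvPolynomial.eval x0 P = 0 := by rw [hP, map_zero]
    rw [heval x0] at h0
    set M0 : Matrix (Fin n) (Fin k) ℝ := (Matrix.of fun i j => x0 (i, j)) * B with hM0
    obtain ⟨v, hv0, hv⟩ := (Matrix.exists_mulVec_eq_zero_iff).mpr h0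
    have hM0v : M0.mulVec v = 0 := by
      have hmem : v ∈ LinearMap.ker ((M0ᵀ * M0).mulVecLin) :=
        LinearMap.mem_ker.mpr (by rw [Matrix.mulVecLin_apply]; exact hv)
      rw [Matrix.ker_mulVecLin_transpose_mul_self] at hmem
      have := LinearMap.mem_ker.mp hmem
      rwa [Matrix.mulVecLin_apply] at this
    set w : Fin p → ℝ := B.mulVec v with hw
    have hXw : (Matrix.of fun i j => x0 (i, j)).mulVec w = 0 := by
      rw [hw, Matrix.mulVec_mulVec, ← hM0, hM0v]
    have hBtw : Bᵀ.mulVec w = 0 := by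
      funext l
      have hl : (l : ℕ) < n := lt_of_lt_of_le l.2 hk
      have := congrFun hXw ⟨l, hl⟩
      simp only [Matrix.mulVec, dotProduct, Matrix.of_apply, Pi.zero_apply] at this ⊢
      rw [← this]
      refine Finset.sum_congr rfl fun j _ => ?_
      simp only [Matrix.transpose_apply, hx0]
      rw [dif_pos l.2]
    have hww : w ⬝ᵥ w = 0 := by
      have : v ⬝ᵥ (Bᵀ.mulVec w) = 0 := by rw [hBtw, dotProduct_zero]
      rwa [Matrix.dotProduct_mulVec, Matrix.vecMul_transpose, ← hw] at this
    have hw0 : w = 0 := dotProduct_self_eq_zero.mp hww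
    exact hv0 (hBinj v (by rw [← hw]; exact hw0))
  -- transfer via the curry equivalence
  have hmain : volume {X : Fin n → Fin p → ℝ |
      ∃ β : Fin p → ℝ, β ≠ 0 ∧ (Matrix.of X).mulVec β = 0 ∧ D.mulVec β = 0} = 0 := by
    rw [hset]
    set S : Set (Fin n → Fin p → ℝ) :=
      {X | (((Matrix.of X * B)ᵀ * (Matrix.of X * B)).det = 0)} with hS
    have hpre : (mcurry n p) ⁻¹' S = {x : (Fin n × Fin p) → ℝ | MvPolynomial.eval x P = 0} := by
      ext x
      simp only [Set.mem_preimage, hS, Set.mem_setOf_eq, heval x]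
      rfl
    have hmp := mcurry_measurePreserving p n
    calc volume S = (volume.map (mcurry n p)) S := by rw [hmp.map_eq]
      _ = volume ((mcurry n p) ⁻¹' S) := MeasurableEquiv.map_apply _ _
      _ = 0 := by
          rw [hpre]
          -- transfer Fin n × Fin p to Fin (n*p)
          have hcard : Fintype.card (Fin n × Fin p) = n * p := by simp
          let eidx : Fin (n * p) ≃ (Fin n × Fin p) :=
            (Fintype.equivFinOfCardEq hcard).symm
          have hPr : MvPolynomial.rename eidx.symm P ≠ 0 := by
            intro h
            exact hP0 ((MvPolynomial.rename_injective _ eidx.symm.injective)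
              (by rw [h, map_zero]))
          have := mvpoly_zero_set_null (n * p) (MvPolynomial.rename eidx.symm P) hPr
          have hmpi := volume_measurePreserving_piCongrLeft (fun _ : Fin n × Fin p => ℝ) eidx
          have hpre2 : (MeasurableEquiv.piCongrLeft (fun _ : Fin n × Fin p => ℝ) eidx) ⁻¹'
              {x : (Fin n × Fin p) → ℝ | MvPolynomial.eval x P = 0}
              = {y : Fin (n * p) → ℝ |
                  MvPolynomial.eval y (MvPolynomial.rename eidx.symm P) = 0} := by
            ext y
            simp only [Set.mem_preimage, Set.mem_setOf_eq, MvPolynomial.eval_rename]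
            have hy : (MeasurableEquiv.piCongrLeft (fun _ : Fin n × Fin p => ℝ) eidx) y
                = y ∘ eidx.symm := by
              funext q
              rw [MeasurableEquiv.coe_piCongrLeft,
                show q = eidx (eidx.symm q) from (eidx.apply_symm_apply q).symm,
                Equiv.piCongrLeft_apply_apply]
              simp
            rw [hy]
          calc volume {x : (Fin n × Fin p) → ℝ | MvPolynomial.eval x P = 0}
              = (volume.map (MeasurableEquiv.piCongrLeft (fun _ : Fin n × Fin p => ℝ) eidx))
                {x : (Fin n × Fin p) → ℝ | MvPolynomial.eval x P = 0} := by rw [hmpi.map_eq]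
            _ = volume ((MeasurableEquiv.piCongrLeft (fun _ : Fin n × Fin p => ℝ) eidx) ⁻¹'
                {x : (Fin n × Fin p) → ℝ | MvPolynomial.eval x P = 0}) :=
                MeasurableEquiv.map_apply _ _
            _ = 0 := by rw [hpre2]; exact this
  exact ⟨hmain, fun μ hμ => hμ hmain⟩
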